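/- arXiv:1104.0750 — 5 statements merged into one kernel-verified Lean document; each statement's English description precedes it below -/
import Mathlib

section
/- Let X be a real Banach space, A : X ⇒ X* monotone with (0,0) ∈ gra A, and suppose A is of type (FP). Fix (x₀**, x₀*) ∈ X** × X* and a bounded net (x_α) in X weak*-converging to x₀** with sup_α ‖x_α‖ = M < ∞. Suppose for every α, (x_α, x₀*) ∉ gra A. Then for every ε > 0, F_A(x₀**, x₀*) ≥ ⟨x₀**, x₀*⟩ − ε(‖x₀**‖ + M), where F_A is the extended Fitzpatrick function. -/
open NormedSpace Filter

noncomputable section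

variable {X : Type*}

/-- A set-valued operator `A : X ⇒ X*` identified with its graph is monotone. -/
def IsMonotoneGraph [NormedAddCommGroup X] [NormedSpace ℝ X]
    (A : Set (X × StrongDual ℝ X)) : Prop :=
  ∀ p ∈ A, ∀ q ∈ A, 0 ≤ (p.2 - q.2) (p.1 - q.1)

/-- Maximal monotonicity: monotone, and every monotonically related pair belongs to the graph. -/
def IsMaxMonotoneGraph [NormedAddCommGroup X] [NormedSpace ℝ X]
    (A : Set (X × StrongDual ℝ X)) : Prop :=
  IsMonotoneGraph A ∧
    ∀ (x : X) (x' : StrongDual ℝ X), (∀ a ∈ A, 0 ≤ (x' - a.2) (x - a.1)) → (x, x') ∈ A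

/-- The Fitzpatrick function on `X × X*`, valued in the extended reals. -/
def fitz [NormedAddCommGroup X] [NormedSpace ℝ X]
    (A : Set (X × StrongDual ℝ X)) (x : X) (x' : StrongDual ℝ X) : EReal :=
  ⨆ a ∈ A, ((a.2 x + x' a.1 - a.2 a.1 : ℝ) : EReal)

/-- The extended Fitzpatrick function on `X** × X*`, valued in the extended reals. -/
def fitzExt [NormedAddCommGroup X] [NormedSpace ℝ X]
    (A : Set (X × StrongDual ℝ X)) (x'' : StrongDual ℝ (StrongDual ℝ X)) (x' : StrongDual ℝ X) : EReal :=
  ⨆ a ∈ A, ((x'' a.2 + x' a.1 - a.2 a.1 : ℝ) : EReal)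

/-- The range of the operator with graph `A`. -/
def graphRan [NormedAddCommGroup X] [NormedSpace ℝ X]
    (A : Set (X × StrongDual ℝ X)) : Set (StrongDual ℝ X) :=
  Prod.snd '' A

/-- Type (FP): Fitzpatrick–Phelps operators. -/
def IsTypeFP [NormedAddCommGroup X] [NormedSpace ℝ X]
    (A : Set (X × StrongDual ℝ X)) : Prop :=
  ∀ U : Set (StrongDual ℝ X), IsOpen U → Convex ℝ U → (U ∩ graphRan A).Nonempty →
    ∀ (x : X) (x' : StrongDual ℝ X), x' ∈ U →
      (∀ a ∈ A, a.2 ∈ U → 0 ≤ (x' - a.2) (x - a.1)) → (x, x') ∈ A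

/-- Type (NI): negative infimum operators. -/
def IsTypeNI [NormedAddCommGroup X] [NormedSpace ℝ X]
    (A : Set (X × StrongDual ℝ X)) : Prop :=
  ∀ (x'' : StrongDual ℝ (StrongDual ℝ X)) (x' : StrongDual ℝ X),
    ((x'' x' : ℝ) : EReal) ≤ fitzExt A x'' x'

/-- Type (D): dense type operators (Gossez). -/
def IsTypeD.{u} [NormedAddCommGroup X] [NormedSpace ℝ X]
    (A : Set (X × StrongDual ℝ X)) : Prop :=
  ∀ (x'' : StrongDual ℝ (StrongDual ℝ X)) (x' : StrongDual ℝ X),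
    (∀ a ∈ A, 0 ≤ a.2 a.1 - x' a.1 - x'' a.2 + x'' x') →
    ∃ (ι : Type u) (l : Filter ι), l.NeBot ∧ ∃ a : ι → X × StrongDual ℝ X,
      (∀ i, a i ∈ A) ∧ (∃ M : ℝ, ∀ i, ‖(a i).1‖ ≤ M ∧ ‖(a i).2‖ ≤ M) ∧
      (∀ f : StrongDual ℝ X, Tendsto (fun i => f ((a i).1)) l (nhds (x'' f))) ∧
      Tendsto (fun i => (a i).2) l (nhds x')

open Pointwise

/-- key estimate in the main theorem: for an (FP) operator with `(0,0)` in its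
graph and a bounded net in `X` weak*-converging to `x₀**` avoiding the graph at level `x₀*`,
the extended Fitzpatrick function is bounded below by `⟨x₀**,x₀*⟩ − ε(‖x₀**‖ + M)`. -/
theorem fitzExt_lower_bound_of_typeFP [NormedAddCommGroup X] [NormedSpace ℝ X]
    [CompleteSpace X]
    (A : Set (X × StrongDual ℝ X)) (hA : IsMonotoneGraph A)
    (h0 : ((0 : X), (0 : StrongDual ℝ X)) ∈ A) (hFP : IsTypeFP A)
    (x₀'' : StrongDual ℝ (StrongDual ℝ X)) (x₀' : StrongDual ℝ X)
    {ι : Type*} (l : Filter ι) (hl : l.NeBot) (x : ι → X)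
    (hconv : ∀ f : StrongDual ℝ X, Tendsto (fun α => f (x α)) l (nhds (x₀'' f)))
    (M : ℝ) (hM : ∀ α, ‖x α‖ ≤ M)
    (hnot : ∀ α, (x α, x₀') ∉ A)
    (ε : ℝ) (hε : 0 < ε) :
    ((x₀'' x₀' - ε * (‖x₀''‖ + M) : ℝ) : EReal) ≤ fitzExt A x₀'' x₀' := by
  classical
  have hne : Nonempty ι := nonempty_of_neBot l
  obtain ⟨α₀⟩ := hne
  have hM0 : 0 ≤ M := le_trans (norm_nonneg _) (hM α₀)
  set r : ℝ := x₀'' x₀' - ε * (‖x₀''‖ + M) with hr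
  have key : ∀ η : ℝ, 0 < η → ((r - η : ℝ) : EReal) ≤ fitzExt A x₀'' x₀' := by
    intro η hη
    -- choose α with |x₀'(x α) - x₀'' x₀'| < η
    have hev : ∀ᶠ α in l, dist (x₀' (x α)) (x₀'' x₀') < η :=
      Metric.tendsto_nhds.mp (hconv x₀') η hη
    obtain ⟨α, hα⟩ := hev.exists
    rw [Real.dist_eq] at hα
    -- the open convex set U
    set U : Set (StrongDual ℝ X) := segment ℝ 0 x₀' + Metric.ball (0 : StrongDual ℝ X) ε with hUdef
    have hUopen : IsOpen U := Metric.isOpen_ball.add_left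
    have hUconv : Convex ℝ U := (convex_segment _ _).add (convex_ball _ _)
    have hx₀'U : x₀' ∈ U :=
      ⟨x₀', right_mem_segment _ _ _, 0, Metric.mem_ball_self hε, add_zero _⟩
    have h0U : (0 : StrongDual ℝ X) ∈ U :=
      ⟨0, left_mem_segment _ _ _, 0, Metric.mem_ball_self hε, add_zero _⟩
    have hneU : (U ∩ graphRan A).Nonempty := ⟨0, h0U, ⟨(0, 0), h0, rfl⟩⟩
    have hFP' := hFP U hUopen hUconv hneU (x α) x₀' hx₀'U
    have hA' : ¬ (∀ a ∈ A, a.2 ∈ U → 0 ≤ (x₀' - a.2) (x α - a.1)) :=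
      fun h => hnot α (hFP' h)
    push_neg at hA'
    obtain ⟨a, haA, haU, hlt⟩ := hA'
    obtain ⟨p, hp, c, hc, hpc⟩ := haU
    rw [segment_eq_image] at hp
    obtain ⟨t, ht, rfl⟩ := hp
    have hpc' : a.2 = t • x₀' + c := by
      rw [← hpc]; simp
    have hc' : ‖c‖ < ε := by rwa [mem_ball_zero_iff] at hc
    have ht0 : 0 ≤ t := ht.1
    have ht1 : t ≤ 1 := ht.2
    -- strict inequality from FP failure
    have hlt' : x₀' (x α) < a.2 (x α) + x₀' a.1 - a.2 a.1 := by
      have := hlt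
      simp only [ContinuousLinearMap.sub_apply, map_sub] at this
      linarith
    -- estimates
    have hb1 : |x₀'' c| ≤ ‖x₀''‖ * ε := by
      calc |x₀'' c| ≤ ‖x₀''‖ * ‖c‖ := x₀''.le_opNorm c
        _ ≤ ‖x₀''‖ * ε := by
            exact mul_le_mul_of_nonneg_left hc'.le (by positivity)
    have hb2 : |c (x α)| ≤ ε * M := by
      calc |c (x α)| ≤ ‖c‖ * ‖x α‖ := c.le_opNorm _
        _ ≤ ε * M := mul_le_mul hc'.le (hM α) (norm_nonneg _) hε.le
    have hx2 : x₀'' a.2 = t * x₀'' x₀' + x₀'' c := by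
      rw [hpc']; simp [mul_comm]
    have hx3 : a.2 (x α) = t * x₀' (x α) + c (x α) := by
      rw [hpc']; simp [mul_comm]
    have hval : r - η ≤ x₀'' a.2 + x₀' a.1 - a.2 a.1 := by
      have h1 : x₀'' a.2 + x₀' a.1 - a.2 a.1
          = (a.2 (x α) + x₀' a.1 - a.2 a.1) + t * (x₀'' x₀' - x₀' (x α))
            + (x₀'' c - c (x α)) := by
        rw [hx2, hx3]; ring
      have h2 : |(1 - t) * (x₀' (x α) - x₀'' x₀')| ≤ |x₀' (x α) - x₀'' x₀'| := by
        have habs : |1 - t| ≤ 1 := by rw [abs_le]; constructor <;> linarith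
        calc |(1 - t) * (x₀' (x α) - x₀'' x₀')| = |1 - t| * |x₀' (x α) - x₀'' x₀'| :=
              abs_mul _ _
          _ ≤ 1 * |x₀' (x α) - x₀'' x₀'| :=
              mul_le_mul_of_nonneg_right habs (abs_nonneg _)
          _ = _ := one_mul _
      have h3 := abs_le.mp hb1
      have h4 := abs_le.mp hb2
      have h5 := abs_le.mp (h2.trans hα.le)
      have hP : t * (x₀'' x₀' - x₀' (x α))
          = (x₀'' x₀' - x₀' (x α)) + (1 - t) * (x₀' (x α) - x₀'' x₀') := by ring
      rw [h1, hr]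
      linarith [h3.1, h4.2, h5.1, h5.2, hlt', hP]
    calc ((r - η : ℝ) : EReal) ≤ ((x₀'' a.2 + x₀' a.1 - a.2 a.1 : ℝ) : EReal) := by
          exact_mod_cast hval
      _ ≤ fitzExt A x₀'' x₀' := le_iSup₂ (f := fun (a : X × StrongDual ℝ X) (_ : a ∈ A) =>
            ((x₀'' a.2 + x₀' a.1 - a.2 a.1 : ℝ) : EReal)) a haA
  rw [← EReal.ge_of_forall_gt_iff_ge]
  intro z hz
  have hz' : z < r := by exact_mod_cast hz
  have := key (r - z) (by linarith)
  simpa using this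
end
end

section
/- Let X be a real Banach space and A : X ⇒ X* a maximally monotone operator of type (FP). Then A is of type (NI): for every (x**, x*) ∈ X** × X*, sup_{(a,a*) ∈ gra A} (⟨a, x*⟩ + ⟨a*, x**⟩ − ⟨a, a*⟩) ≥ ⟨x**, x*⟩. -/
open NormedSpace Filter

noncomputable section

variable {X : Type*}

/-- Main result: every maximally monotone operator of type (FP) is of
type (NI). -/
theorem typeFP_implies_typeNI [NormedAddCommGroup X] [NormedSpace ℝ X] [CompleteSpace X]
    (A : Set (X × StrongDual ℝ X)) (hA : IsMaxMonotoneGraph A) (hFP : IsTypeFP A) :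
    IsTypeNI A := by
  intro x'' x'
  by_contra hlt
  push_neg at hlt
  -- A is nonempty
  have hne : A.Nonempty := by
    rcases Set.eq_empty_or_nonempty A with h | h
    · exact ⟨(0, 0), hA.2 0 0 (by simp [h])⟩
    · exact h
  obtain ⟨⟨a0, a0s⟩, ha0⟩ := hne
  -- extract a real strict upper bound c on the Fitzpatrick terms
  obtain ⟨c, hc1, hc2⟩ := EReal.exists_between_coe_real hlt
  have hc2' : c < x'' x' := by exact_mod_cast hc2
  have hbound : ∀ a ∈ A, x'' a.2 + x' a.1 - a.2 a.1 ≤ c := by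
    intro a ha
    have h1 : ((x'' a.2 + x' a.1 - a.2 a.1 : ℝ) : EReal) ≤ fitzExt A x'' x' :=
      le_iSup₂ (f := fun (a : X × StrongDual ℝ X) (_ : a ∈ A) =>
        ((x'' a.2 + x' a.1 - a.2 a.1 : ℝ) : EReal)) a ha
    have := h1.trans_lt hc1
    exact_mod_cast this.le
  set ε : ℝ := x'' x' - c with hε_def
  have hε : 0 < ε := by simp [hε_def]; linarith
  -- choose x0 and s so that a0s lies in the half-space slice
  obtain ⟨x0, s, hkey⟩ :
      ∃ (x0 : X) (s : ℝ), x'' x' + s * x' x0 - ε < s * a0s x0 + x'' a0s := by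
    by_cases hg : a0s = x'
    · exact ⟨0, 0, by simp [hg]; linarith⟩
    · have hne0 : a0s - x' ≠ 0 := sub_ne_zero_of_ne hg
      obtain ⟨y0, hy0⟩ : ∃ y0 : X, (a0s - x') y0 ≠ 0 := by
        by_contra h
        push_neg at h
        exact hne0 (ContinuousLinearMap.ext fun y => by simpa using h y)
      obtain ⟨x0, hx0⟩ : ∃ x0 : X, 0 < (a0s - x') x0 := by
        rcases hy0.lt_or_gt with h | h
        · exact ⟨-y0, by simpa using h⟩
        · exact ⟨y0, h⟩
      set s : ℝ := (|x'' (a0s - x')| + 1) / ((a0s - x') x0) with hs_def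
      refine ⟨x0, s, ?_⟩
      have hsp : s * ((a0s - x') x0) = |x'' (a0s - x')| + 1 := by
        rw [hs_def]; exact div_mul_cancel₀ _ hx0.ne'
      have h1 : (a0s - x') x0 = a0s x0 - x' x0 := by
        simp [ContinuousLinearMap.sub_apply]
      have h2 : x'' (a0s - x') = x'' a0s - x'' x' := by simp [map_sub]
      have h3 := neg_abs_le (x'' (a0s - x'))
      have h4 : s * a0s x0 - s * x' x0 = |x'' (a0s - x')| + 1 := by
        rw [← mul_sub, ← h1]; exact hsp
      linarith [h2, h3, h4, hε]
  -- the open convex half-space slice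
  set G : StrongDual ℝ (StrongDual ℝ X) := s • (inclusionInDoubleDual ℝ X x0) + x'' with hG_def
  have hGapp : ∀ y : StrongDual ℝ X, G y = s * y x0 + x'' y := by
    intro y
    simp [hG_def, NormedSpace.dual_def, smul_eq_mul]
  set U : Set (StrongDual ℝ X) := G ⁻¹' Set.Ioi (x'' x' + s * x' x0 - ε) with hU_def
  have hUopen : IsOpen U := isOpen_Ioi.preimage G.continuous
  have hUconv : Convex ℝ U := (convex_Ioi _).linear_preimage (G : StrongDual ℝ X →ₗ[ℝ] ℝ)
  have ha0U : a0s ∈ U := by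
    simp only [hU_def, Set.mem_preimage, Set.mem_Ioi, hGapp]
    linarith
  have hx'U : x' ∈ U := by
    simp only [hU_def, Set.mem_preimage, Set.mem_Ioi, hGapp]
    linarith
  have hUne : (U ∩ graphRan A).Nonempty := ⟨a0s, ha0U, ⟨(a0, a0s), ha0, rfl⟩⟩
  -- monotone relation of ((-s) • x0, x') to the slice
  have hrel : ∀ a ∈ A, a.2 ∈ U → 0 ≤ (x' - a.2) ((-s) • x0 - a.1) := by
    rintro ⟨a, as⟩ ha haU
    have h1 : x'' as + x' a - as a ≤ c := hbound _ ha
    have h2 : x'' x' + s * x' x0 - ε < s * as x0 + x'' as := by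
      have := haU
      simpa only [hU_def, Set.mem_preimage, Set.mem_Ioi, hGapp] using this
    have hexp : (x' - as) ((-s) • x0 - a)
        = -s * x' x0 - x' a + s * as x0 + as a := by
      simp [ContinuousLinearMap.sub_apply, map_sub, map_smul, smul_eq_mul]
      ring
    rw [hexp]
    have hc' : c = x'' x' - ε := by simp [hε_def]
    linarith
  have hmem : ((-s) • x0, x') ∈ A := hFP U hUopen hUconv hUne ((-s) • x0) x' hx'U hrel
  have := hbound _ hmem
  simp only at this
  linarith
end
end

section
/- Let X be a real Banach space and A : X ⇒ X* a maximally monotone operator of type (D). Then for every (x**, x*) ∈ X** × X* that is monotonically related to gra A in the bidual sense (i.e., ⟨a − x**, a* − x*⟩ ≥ 0 for all (a, a*) ∈ gra A), one has F_A(x**, x*) = ⟨x**, x*⟩. -/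
open NormedSpace Filter

noncomputable section

variable {X : Type*}

/-- for a maximally monotone operator of type (D), the extended Fitzpatrick
function equals the pairing at any point monotonically related to the graph in the bidual
sense. -/
theorem typeD_fitzExt_eq_pairing [NormedAddCommGroup X] [NormedSpace ℝ X] [CompleteSpace X]
    (A : Set (X × StrongDual ℝ X)) (hA : IsMaxMonotoneGraph A) (hD : IsTypeD A)
    (x'' : StrongDual ℝ (StrongDual ℝ X)) (x' : StrongDual ℝ X)
    (hrel : ∀ a ∈ A, 0 ≤ a.2 a.1 - x' a.1 - x'' a.2 + x'' x') :
    fitzExt A x'' x' = ((x'' x' : ℝ) : EReal) := by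
  refine le_antisymm (iSup₂_le fun a ha => ?_) ?_
  · have h := hrel a ha
    exact_mod_cast (by linarith : (x'' a.2 + x' a.1 - a.2 a.1 : ℝ) ≤ x'' x')
  · obtain ⟨ι, l, hl, a, haA, ⟨M, hM⟩, hw, hs⟩ := hD x'' x' hrel
    have t1 : Tendsto (fun i => x'' ((a i).2)) l (nhds (x'' x')) :=
      (x''.continuous.tendsto x').comp hs
    have t2 : Tendsto (fun i => x' ((a i).1)) l (nhds (x'' x')) := hw x'
    have hnorm : Tendsto (fun i => ‖(a i).2 - x'‖) l (nhds 0) := by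
      rw [← tendsto_sub_nhds_zero_iff] at hs
      simpa using hs.norm
    have t0 : Tendsto (fun i => ((a i).2 - x') ((a i).1)) l (nhds 0) := by
      apply squeeze_zero_norm' (by
        filter_upwards with i
        calc ‖((a i).2 - x') ((a i).1)‖ ≤ ‖(a i).2 - x'‖ * ‖(a i).1‖ :=
              ((a i).2 - x').le_opNorm _
          _ ≤ ‖(a i).2 - x'‖ * M := by
              have := (hM i).1
              have h2 : (0:ℝ) ≤ ‖(a i).2 - x'‖ := norm_nonneg _
              nlinarith)
      simpa using hnorm.mul_const M
    have t3 : Tendsto (fun i => (a i).2 ((a i).1)) l (nhds (x'' x')) := by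
      have := t0.add t2
      simpa using this
    have tg : Tendsto (fun i => (x'' ((a i).2) + x' ((a i).1) - (a i).2 ((a i).1) : ℝ))
        l (nhds (x'' x')) := by
      have := (t1.add t2).sub t3
      simpa using this
    have tge : Tendsto (fun i => ((x'' ((a i).2) + x' ((a i).1) - (a i).2 ((a i).1) : ℝ) : EReal))
        l (nhds ((x'' x' : ℝ) : EReal)) := (continuous_coe_real_ereal.tendsto _).comp tg
    refine le_of_tendsto tge (Filter.Eventually.of_forall fun i => ?_)
    exact le_iSup₂ (f := fun p (_ : p ∈ A) => ((x'' p.2 + x' p.1 - p.2 p.1 : ℝ) : EReal))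
      (a i) (haA i)
end
end

section
/- Let X be a real Banach space and A : X ⇒ X* a maximally monotone operator of type (D). Then A is of type (NI): F_A(x**, x*) ≥ ⟨x**, x*⟩ for all (x**, x*) ∈ X** × X*. -/
open NormedSpace Filter

noncomputable section

variable {X : Type*}

/-- every maximally monotone operator of type (D) is of type (NI). -/
theorem typeD_implies_typeNI [NormedAddCommGroup X] [NormedSpace ℝ X] [CompleteSpace X]
    (A : Set (X × StrongDual ℝ X)) (hA : IsMaxMonotoneGraph A) (hD : IsTypeD A) :
    IsTypeNI A := by
  intro x'' x'
  by_cases h : ∀ a ∈ A, 0 ≤ a.2 a.1 - x' a.1 - x'' a.2 + x'' x'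
  · obtain ⟨ι, l, hl, a, haA, ⟨M, hM⟩, hfst, hsnd⟩ := hD x'' x' h
    have hM0 : 0 ≤ M := by
      obtain ⟨i⟩ := Filter.nonempty_of_neBot l
      exact le_trans (norm_nonneg _) (hM i).1
    -- the perturbation term tends to 0
    have h2 : Tendsto (fun i => ‖x' - (a i).2‖ * M) l (nhds 0) := by
      have hn : Tendsto (fun i => ‖x' - (a i).2‖) l (nhds 0) := by
        have := (tendsto_const_nhds (x := x') (f := l)).sub hsnd
        simpa using this.norm
      simpa using hn.mul_const M
    have h1 : Tendsto (fun i => (x' - (a i).2) ((a i).1)) l (nhds 0) := by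
      apply squeeze_zero_norm _ h2
      intro i
      calc ‖(x' - (a i).2) ((a i).1)‖ ≤ ‖x' - (a i).2‖ * ‖(a i).1‖ :=
            (x' - (a i).2).le_opNorm _
        _ ≤ ‖x' - (a i).2‖ * M :=
            mul_le_mul_of_nonneg_left (hM i).1 (norm_nonneg _)
    have h3 : Tendsto (fun i => x'' ((a i).2)) l (nhds (x'' x')) :=
      (x''.continuous.tendsto x').comp hsnd
    have hg : Tendsto (fun i => x'' ((a i).2) + x' ((a i).1) - (a i).2 ((a i).1)) l
        (nhds (x'' x')) := by
      have := h3.add h1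
      have heq : (fun i => x'' ((a i).2) + x' ((a i).1) - (a i).2 ((a i).1))
          = fun i => x'' ((a i).2) + (x' - (a i).2) ((a i).1) := by
        funext i
        simp [ContinuousLinearMap.sub_apply]
        ring
      rw [heq]
      simpa using this
    have hgE : Tendsto (fun i => ((x'' ((a i).2) + x' ((a i).1) - (a i).2 ((a i).1) : ℝ) : EReal))
        l (nhds ((x'' x' : ℝ) : EReal)) := by
      exact_mod_cast EReal.tendsto_coe.2 hg
    refine le_of_tendsto' hgE ?_
    intro i
    exact le_iSup₂ (f := fun p (_ : p ∈ A) => ((x'' p.2 + x' p.1 - p.2 p.1 : ℝ) : EReal))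
      (a i) (haA i)
  · push_neg at h
    obtain ⟨a, haA, hlt⟩ := h
    have hle : (x'' x' : ℝ) ≤ x'' a.2 + x' a.1 - a.2 a.1 := by linarith
    calc ((x'' x' : ℝ) : EReal) ≤ ((x'' a.2 + x' a.1 - a.2 a.1 : ℝ) : EReal) := by
          exact_mod_cast hle
      _ ≤ fitzExt A x'' x' :=
          le_iSup₂ (f := fun p (_ : p ∈ A) => ((x'' p.2 + x' p.1 - p.2 p.1 : ℝ) : EReal)) a haA
end
end

section
/- Let X be a reflexive real Banach space and A : X ⇒ X* maximally monotone. Then A is of type (NI): identifying X** with X, F_A(x, x*) ≥ ⟨x, x*⟩ for all (x, x*) ∈ X × X*. -/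
open NormedSpace Filter

noncomputable section

variable {X : Type*}

/-- on a reflexive Banach space, every maximally monotone operator is of
type (NI); identifying `X**` with `X` this says `F_A ≥ ⟨·,·⟩` on `X × X*`. -/
theorem reflexive_maxMonotone_typeNI [NormedAddCommGroup X] [NormedSpace ℝ X]
    [CompleteSpace X]
    (hrefl : Function.Surjective (inclusionInDoubleDual ℝ X))
    (A : Set (X × StrongDual ℝ X)) (hA : IsMaxMonotoneGraph A)
    (x : X) (x' : StrongDual ℝ X) :
    ((x' x : ℝ) : EReal) ≤ fitz A x x' := by
  by_contra h
  push_neg at h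
  have hmem : (x, x') ∈ A := by
    apply hA.2
    intro a ha
    have hle : ((a.2 x + x' a.1 - a.2 a.1 : ℝ) : EReal) ≤ fitz A x x' :=
      le_iSup_of_le a (le_iSup_of_le ha le_rfl)
    have hlt : ((a.2 x + x' a.1 - a.2 a.1 : ℝ) : EReal) < ((x' x : ℝ) : EReal) :=
      lt_of_le_of_lt hle h
    have hr : a.2 x + x' a.1 - a.2 a.1 < x' x := by exact_mod_cast hlt
    simp only [ContinuousLinearMap.sub_apply, map_sub]
    nlinarith
  have hge : ((x' x + x' x - x' x : ℝ) : EReal) ≤ fitz A x x' :=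
    le_iSup_of_le (x, x') (le_iSup_of_le hmem le_rfl)
  have : ((x' x : ℝ) : EReal) ≤ fitz A x x' := by
    simpa using hge
  exact absurd this (not_le.mpr h)
end
end
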